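/- The set of n×n real matrices having at least one nonzero real eigenvalue contains a nonempty open set (e.g., a neighborhood of the identity matrix), and for n even, the set of matrices with no real eigenvalues also contains a nonempty open set. Hence for n even, both finite-time-blowup initial data and eternal-solution initial data for X' = X·X form sets with nonempty interior. -/

import Mathlib

open Matrix Polynomial Filter

open scoped Kronecker

lemma my_eval_charpoly {n : ℕ} (M : Matrix (Fin n) (Fin n) ℝ) (r : ℝ) :
    M.charpoly.eval r = (r • (1 : Matrix (Fin n) (Fin n) ℝ) - M).det := by
  rw [Matrix.charpoly, _root_.eval_det, matPolyEquiv_charmatrix]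
  simp only [eval_sub, eval_X, eval_C, Matrix.scalar_apply]
  congr 2
  ext i j
  rw [Matrix.diagonal_apply, Matrix.smul_apply, Matrix.one_apply]
  split <;> simp

section Aux

attribute [local instance] Matrix.linftyOpNormedRing Matrix.linftyOpNormedAlgebra

lemma my_part2 {n : ℕ} (hev : Even n) :
    ∃ U : Set (Matrix (Fin n) (Fin n) ℝ), IsOpen U ∧ U.Nonempty ∧
        ∀ A ∈ U, ∀ lam : ℝ, (lam • (1 : Matrix (Fin n) (Fin n) ℝ) - A).det ≠ 0 := by
  obtain ⟨m, hm⟩ := hev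
  -- build a matrix J with J * J = -1
  set r : Matrix (Fin 2) (Fin 2) ℝ := !![0, -1; 1, 0] with hrdef
  have hr : r * r = -1 := by
    ext i j
    fin_cases i <;> fin_cases j <;>
      simp [hrdef, Matrix.mul_apply, Fin.sum_univ_two, Matrix.one_apply]
  have hmn : m * 2 = n := by omega
  let e : Fin m × Fin 2 ≃ Fin n := (finProdFinEquiv).trans (finCongr hmn)
  let J : Matrix (Fin n) (Fin n) ℝ :=
    Matrix.reindexAlgEquiv ℝ ℝ e ((1 : Matrix (Fin m) (Fin m) ℝ) ⊗ₖ r)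
  have hJ : J * J = -1 := by
    have h1 : ((1 : Matrix (Fin m) (Fin m) ℝ) ⊗ₖ r) * ((1 : Matrix (Fin m) (Fin m) ℝ) ⊗ₖ r)
        = -1 := by
      rw [← Matrix.mul_kronecker_mul, hr, one_mul]
      rw [show (-1 : Matrix (Fin 2) (Fin 2) ℝ) = (-1 : ℝ) • 1 by simp]
      rw [Matrix.kronecker_smul, Matrix.one_kronecker_one]
      simp
    show (Matrix.reindexAlgEquiv ℝ ℝ e _) * (Matrix.reindexAlgEquiv ℝ ℝ e _) = -1
    rw [← _root_.map_mul, h1, map_neg, _root_.map_one]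
  refine ⟨{A | ‖A * A + 1‖ < 1}, ?_, ⟨J, ?_⟩, ?_⟩
  · have hc : Continuous fun A : Matrix (Fin n) (Fin n) ℝ => ‖A * A + 1‖ :=
      (continuous_norm.comp ((continuous_id.matrix_mul continuous_id).add continuous_const))
    exact isOpen_lt hc continuous_const
  · show ‖J * J + 1‖ < 1
    rw [hJ]
    simp
  · rintro A hA lam hdet
    obtain ⟨v, hv0, hv⟩ := (Matrix.exists_mulVec_eq_zero_iff).2 hdet
    have hAv : A *ᵥ v = lam • v := by
      have := hv
      rw [Matrix.sub_mulVec, sub_eq_zero] at this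
      rw [← this, Matrix.smul_mulVec, Matrix.one_mulVec]
    have key : (A * A + 1) *ᵥ v = (lam ^ 2 + 1) • v := by
      rw [Matrix.add_mulVec, Matrix.one_mulVec, ← Matrix.mulVec_mulVec, hAv,
        Matrix.mulVec_smul, hAv, smul_smul]
      rw [add_smul, one_smul, pow_two]
    have hvpos : (0 : ℝ) < ‖v‖ := by
      rw [norm_pos_iff]
      exact hv0
    have h1 : ‖(A * A + 1) *ᵥ v‖ ≤ ‖A * A + 1‖ * ‖v‖ :=
      Matrix.linfty_opNorm_mulVec _ _
    rw [key, norm_smul, Real.norm_of_nonneg (by positivity)] at h1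
    have h2 : (lam ^ 2 + 1) * ‖v‖ < 1 * ‖v‖ :=
      h1.trans_lt (mul_lt_mul_of_pos_right hA hvpos)
    nlinarith [sq_nonneg lam]

end Aux

/-- The set of matrices with a nonzero real eigenvalue contains a nonempty open set, and
for `n` even the set of matrices with no real eigenvalue also contains a nonempty open
set: both blowup data and eternal data for `X' = X X` have nonempty interior. -/
theorem open_sets_of_blowup_and_eternal_data {n : ℕ} (hn : 0 < n) :
    (∃ U : Set (Matrix (Fin n) (Fin n) ℝ), IsOpen U ∧ U.Nonempty ∧
        ∀ A ∈ U, ∃ lam : ℝ, lam ≠ 0 ∧ (lam • (1 : Matrix (Fin n) (Fin n) ℝ) - A).det = 0) ∧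
      (Even n → ∃ U : Set (Matrix (Fin n) (Fin n) ℝ), IsOpen U ∧ U.Nonempty ∧
        ∀ A ∈ U, ∀ lam : ℝ, (lam • (1 : Matrix (Fin n) (Fin n) ℝ) - A).det ≠ 0) := by
  constructor
  · refine ⟨{A | ((1 : Matrix (Fin n) (Fin n) ℝ) - A).det < 0}, ?_, ?_, ?_⟩
    · have hc : Continuous fun A : Matrix (Fin n) (Fin n) ℝ =>
          ((1 : Matrix (Fin n) (Fin n) ℝ) - A).det :=
        (continuous_const.sub continuous_id).matrix_det
      exact isOpen_lt hc continuous_const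
    · refine ⟨Matrix.diagonal (fun i => if i = ⟨0, hn⟩ then 2 else 0), ?_⟩
      show ((1 : Matrix (Fin n) (Fin n) ℝ) - _).det < 0
      rw [show (1 : Matrix (Fin n) (Fin n) ℝ) = Matrix.diagonal (fun _ => (1:ℝ)) from
        (Matrix.diagonal_one).symm, Matrix.diagonal_sub, Matrix.det_diagonal]
      have : ∀ i : Fin n, (1 : ℝ) - (if i = ⟨0, hn⟩ then 2 else 0)
          = if i = ⟨0, hn⟩ then -1 else 1 := by
        intro i; split <;> norm_num
      simp only [this, Finset.prod_ite_eq']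
      simp
    · intro A hA
      have hA' : ((1 : Matrix (Fin n) (Fin n) ℝ) - A).det < 0 := hA
      set p := A.charpoly with hp
      have hmon : p.Monic := A.charpoly_monic
      have hdeg : p.natDegree = n := by
        rw [hp, A.charpoly_natDegree_eq_dim, Fintype.card_fin]
      have hdeg' : 0 < p.degree := by
        rw [Polynomial.degree_eq_natDegree hmon.ne_zero, hdeg]
        exact_mod_cast hn
      have htend : Tendsto (fun x => p.eval x) atTop atTop :=
        p.tendsto_atTop_of_leadingCoeff_nonneg hdeg' (by simp [hmon.leadingCoeff])
      obtain ⟨x₀, hx₀pos, hx₀ge⟩ :=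
        ((htend.eventually_gt_atTop 0).and (eventually_ge_atTop 1)).exists
      have h1 : p.eval 1 < 0 := by rw [hp, my_eval_charpoly, one_smul]; exact hA'
      have hmem : (0:ℝ) ∈ Set.Icc (p.eval 1) (p.eval x₀) := ⟨h1.le, hx₀pos.le⟩
      obtain ⟨c, hc, hc0⟩ := intermediate_value_Icc hx₀ge p.continuous.continuousOn hmem
      refine ⟨c, (zero_lt_one.trans_le hc.1).ne', ?_⟩
      rw [← my_eval_charpoly, ← hp]
      exact hc0
  · exact my_part2
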